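/- arXiv:2601.17294 — 3 statements merged into one kernel-verified Lean document; each statement's English description precedes it below -/
import Mathlib

section
/- Let t, s, d, k be positive integers with 1 ≤ k ≤ d. Let D be a finite set of k-dimensional linear subspaces of ℝ^d with positive weights {ω_V}_{V∈D}, set Ω := ∑_{V∈D} ω_V, and assume {(V, ω_V)}_{V∈D} is a tight t-fusion frame. For each V ∈ D, let Y_V be a finite set of unit vectors in V with positive weights {λ_{V,z}}_{z∈Y_V}, assume Λ := ∑_{z∈Y_V} λ_{V,z} is independent of V, and assume each (Y_V, {λ_{V,z}}) is a weighted spherical s-design on the unit sphere of V, in the equivalent moment form: for every y ∈ ℝ^d and every integer 0 ≤ m ≤ s, ∑_{z∈Y_V} λ_{V,z} ⟨z, P_V y⟩^m equals Λ·((1/2)_{m/2}/(k/2)_{m/2})·‖P_V y‖^m when m is even and equals 0 when m is odd. Set r := min{s, 2t+1}. Then for every y ∈ ℝ^d and every integer 0 ≤ ℓ ≤ r, ∑_{V∈D} ∑_{z∈Y_V} ω_V λ_{V,z} ⟨z, y⟩^ℓ equals Ω·Λ·((1/2)_{ℓ/2}/(d/2)_{ℓ/2})·‖y‖^ℓ when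 ℓ is even and equals 0 when ℓ is odd; that is, the weighted union Z := ⋃_{V∈D} Y_V with weights w(z) := ∑_{V∈D, z∈Y_V} ω_V λ_{V,z} is a weighted spherical r-design on S^{d−1}. -/
open scoped RealInnerProductSpace BigOperators

/-- Orthogonal projection onto a subspace `V` of `ℝ^d`, as a linear endomorphism. -/
noncomputable def proj {d : ℕ} (V : Submodule ℝ (EuclideanSpace ℝ (Fin d))) :
    EuclideanSpace ℝ (Fin d) →ₗ[ℝ] EuclideanSpace ℝ (Fin d) :=
  V.subtype ∘ₗ (V.orthogonalProjectionOnto).toLinearMap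

/-- The Pochhammer symbol `(a)_n = a(a+1)⋯(a+n−1)`. -/
noncomputable def poch (a : ℝ) (n : ℕ) : ℝ := (ascPochhammer ℝ n).eval a

section Aux
open Polynomial

lemma mulcoeff2 (f g : ℝ[X]) : (f*g).coeff 2 = f.coeff 0 * g.coeff 2 + f.coeff 1 * g.coeff 1 + f.coeff 2 * g.coeff 0 := by
  rw [Polynomial.coeff_mul, show Finset.HasAntidiagonal.antidiagonal 2 = {(0,2),(1,1),(2,0)} from rfl,
    Finset.sum_insert (by decide), Finset.sum_insert (by decide), Finset.sum_singleton]
  ring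

lemma mulcoeff1 (f g : ℝ[X]) : (f*g).coeff 1 = f.coeff 0 * g.coeff 1 + f.coeff 1 * g.coeff 0 := by
  rw [Polynomial.coeff_mul, show Finset.HasAntidiagonal.antidiagonal 1 = {(0,1),(1,0)} from rfl,
    Finset.sum_insert (by decide), Finset.sum_singleton]

lemma qcoeff (a b c : ℝ) : (C a + C b * X + C c * X^2).coeff 0 = a ∧ (C a + C b * X + C c * X^2).coeff 1 = b ∧ (C a + C b * X + C c * X^2).coeff 2 = c := by
  refine ⟨?_, ?_, ?_⟩ <;> simp



lemma powcoeff (a b c : ℝ) (n : ℕ) :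
    ((C a + C b * X + C c * X^2)^n).coeff 0 = a^n ∧
    ((C a + C b * X + C c * X^2)^n).coeff 1 = n * a^(n-1) * b ∧
    ((C a + C b * X + C c * X^2)^n).coeff 2 = n * a^(n-1) * c + (n.choose 2 : ℝ) * a^(n-2) * b^2 := by
  induction n with
  | zero => norm_num [Polynomial.coeff_one]
  | succ n ih =>
    obtain ⟨h0, h1, h2⟩ := ih
    obtain ⟨q0, q1, q2⟩ := qcoeff a b c
    rw [pow_succ]
    refine ⟨?_, ?_, ?_⟩
    · rw [Polynomial.mul_coeff_zero, h0, q0, ← pow_succ]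
    · rw [mulcoeff1, h0, h1, q0, q1]
      rcases n with _ | m
      · norm_num
      · rw [Nat.succ_sub_one, Nat.add_sub_cancel, pow_succ]
        push_cast; ring
    · rw [mulcoeff2, h0, h1, h2, q0, q1, q2]
      rcases n with _ | _ | m
      · norm_num
      · norm_num; ring
      · rw [Nat.succ_sub_one, Nat.add_sub_cancel,
          show m + 1 + 1 - 2 = m from rfl, show m + 1 + 1 + 1 - 2 = m + 1 from rfl,
          show (m + 1 + 1 + 1).choose 2 = (m+1+1).choose 1 + (m+1+1).choose 2 from Nat.choose_succ_succ _ 1,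
          Nat.choose_one_right]
        push_cast
        ring

section aux
variable {d : ℕ} (V : Submodule ℝ (EuclideanSpace ℝ (Fin d)))

lemma proj_eq_self {z : EuclideanSpace ℝ (Fin d)} (hz : z ∈ V) : proj V z = z := by
  have := Submodule.orthogonalProjectionOnto_mem_subspace_eq_self (K := V) ⟨z, hz⟩
  simp only [proj, LinearMap.coe_comp, Function.comp_apply, ContinuousLinearMap.coe_coe,
    Submodule.coe_subtype]
  rw [show V.orthogonalProjectionOnto z = V.orthogonalProjectionOnto (⟨z, hz⟩ : V) from rfl, this]

lemma inner_proj_symm (x y : EuclideanSpace ℝ (Fin d)) : ⟪proj V x, y⟫ = ⟪x, proj V y⟫ :=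
  Submodule.inner_starProjection_left_eq_right V x y

lemma inner_proj_left {z : EuclideanSpace ℝ (Fin d)} (hz : z ∈ V) (y : EuclideanSpace ℝ (Fin d)) :
    ⟪z, y⟫ = ⟪z, proj V y⟫ := by
  rw [← inner_proj_symm, proj_eq_self V hz]

lemma norm_proj_add_smul (y e : EuclideanSpace ℝ (Fin d)) (ε : ℝ) :
    ‖proj V (y + ε • e)‖^2
      = ‖proj V y‖^2 + 2 * ⟪proj V y, e⟫ * ε + ‖proj V e‖^2 * ε^2 := by
  rw [map_add, map_smul, norm_add_sq_real, inner_smul_right, norm_smul]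
  rw [← inner_proj_left V (by exact (V.orthogonalProjectionOnto y).2) e]
  simp [mul_pow]
  ring
end aux

section descent
variable {d k : ℕ}

lemma sum_inner_single_sq (u : EuclideanSpace ℝ (Fin d)) :
    ∑ i, ⟪u, EuclideanSpace.single i (1:ℝ)⟫^2 = ‖u‖^2 := by
  have h : ∀ i, ⟪u, EuclideanSpace.single i (1:ℝ)⟫ = u i := by
    intro i; rw [EuclideanSpace.inner_single_right]; simp
  simp_rw [h]
  rw [← real_inner_self_eq_norm_sq, PiLp.inner_apply]
  simp [sq]

lemma norm_proj_sq_eq_sum (V : Submodule ℝ (EuclideanSpace ℝ (Fin d))) (x : EuclideanSpace ℝ (Fin d)) :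
    ‖proj V x‖^2 = ∑ j, ⟪((stdOrthonormalBasis ℝ V) j : EuclideanSpace ℝ (Fin d)), x⟫^2 := by
  set b := stdOrthonormalBasis ℝ V with hbdef
  have hb : Orthonormal ℝ (fun j => ((b j : EuclideanSpace ℝ (Fin d)))) := by
    rw [orthonormal_iff_ite]
    intro i j
    rw [← Submodule.coe_inner]
    exact orthonormal_iff_ite.mp b.orthonormal i j
  have hp : proj V x = ∑ j, ⟪((b j : EuclideanSpace ℝ (Fin d))), x⟫ • (b j : EuclideanSpace ℝ (Fin d)) := by
    have := b.orthogonalProjectionOnto_apply_eq_sum x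
    have h2 := congrArg (V.subtype) this
    simpa [proj] using h2
  rw [← real_inner_self_eq_norm_sq, hp]
  rw [sum_inner]
  simp_rw [inner_sum, inner_smul_left, inner_smul_right, RCLike.conj_to_real,
    orthonormal_iff_ite.mp hb]
  simp [sq]

lemma sum_norm_proj_single (V : Submodule ℝ (EuclideanSpace ℝ (Fin d))) (hV : Module.finrank ℝ V = k) :
    ∑ i, ‖proj V (EuclideanSpace.single i (1:ℝ))‖^2 = (k : ℝ) := by
  simp_rw [norm_proj_sq_eq_sum]
  rw [Finset.sum_comm]
  have h : ∀ j : Fin (Module.finrank ℝ V),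
      ∑ i, ⟪((stdOrthonormalBasis ℝ V) j : EuclideanSpace ℝ (Fin d)), EuclideanSpace.single i (1:ℝ)⟫^2 = 1 := by
    intro j
    rw [sum_inner_single_sq]
    have hn : ‖((stdOrthonormalBasis ℝ V) j : EuclideanSpace ℝ (Fin d))‖ = 1 := by
      rw [Submodule.norm_coe]
      exact (stdOrthonormalBasis ℝ V).orthonormal.1 j
    rw [hn]; norm_num
  simp_rw [h]
  simp [hV]


lemma evalq (a b c eps : ℝ) (n : ℕ) :
    ((C a + C b * X + C c * X^2)^n).eval eps = (a + b*eps + c*eps^2)^n := by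
  simp only [eval_pow, eval_add, eval_mul, eval_C, eval_X]

lemma coeff2q (a b c : ℝ) (m : ℕ) :
    ((C a + C b * X + C c * X^2)^(m+1)).coeff 2
      = (m+1 : ℝ) * a^m * c + ((m+1).choose 2 : ℝ) * a^(m-1) * b^2 := by
  rw [(powcoeff a b c (m+1)).2.2, Nat.add_sub_cancel, show m + 1 - 2 = m - 1 by omega]
  push_cast
  ring

lemma alg_aux (kk : ℝ) (m : ℕ) (a : ℝ) :
    (m+1:ℝ) * a^m * kk + ((m+1).choose 2 : ℝ) * a^(m-1) * (4*a)
      = ((m:ℝ)+1) * ((kk + 2*m) * a^m) := by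
  rcases m with _ | m
  · norm_num
  · rw [Nat.cast_choose_two, show m + 1 - 1 = m from rfl]
    have : a^m * a = a^(m+1) := (pow_succ a m).symm
    push_cast
    linear_combination (2*((m:ℝ)+1+1)*((m:ℝ)+1)) * this

/-- Descent step for tight fusion frame moments. -/
lemma descent (D : Finset (Submodule ℝ (EuclideanSpace ℝ (Fin d))))
    (hdim : ∀ V ∈ D, Module.finrank ℝ V = k)
    (ω : Submodule ℝ (EuclideanSpace ℝ (Fin d)) → ℝ) (m : ℕ) (B : ℝ)
    (h : ∀ x : EuclideanSpace ℝ (Fin d),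
      ∑ V ∈ D, ω V * (‖proj V x‖^2)^(m+1) = B * (‖x‖^2)^(m+1))
    (y : EuclideanSpace ℝ (Fin d)) :
    ((k:ℝ) + 2*m) * ∑ V ∈ D, ω V * (‖proj V y‖^2)^m
      = B * ((d:ℝ) + 2*m) * (‖y‖^2)^m := by
  set e : Fin d → EuclideanSpace ℝ (Fin d) := fun i => EuclideanSpace.single i (1:ℝ) with he
  set F : ℝ[X] := ∑ V ∈ D, C (ω V) *
      ∑ i, (C (‖proj V y‖^2) + C (2*⟪proj V y, e i⟫) * X + C (‖proj V (e i)‖^2) * X^2)^(m+1) with hF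
  set G : ℝ[X] := C B * ∑ i, (C (‖y‖^2) + C (2*⟪y, e i⟫) * X + C 1 * X^2)^(m+1) with hG
  have hFG : F = G := by
    apply Polynomial.funext
    intro ε
    have hL : F.eval ε = ∑ V ∈ D, ω V * ∑ i, (‖proj V (y + ε • e i)‖^2)^(m+1) := by
      rw [hF, Polynomial.eval_finset_sum]
      refine Finset.sum_congr rfl fun V _ => ?_
      rw [Polynomial.eval_mul, Polynomial.eval_C, Polynomial.eval_finset_sum]
      congr 1
      refine Finset.sum_congr rfl fun i _ => ?_
      rw [evalq, norm_proj_add_smul V y (e i) ε]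
    have hR : G.eval ε = B * ∑ i, (‖y + ε • e i‖^2)^(m+1) := by
      rw [hG, Polynomial.eval_mul, Polynomial.eval_C, Polynomial.eval_finset_sum]
      congr 1
      refine Finset.sum_congr rfl fun i _ => ?_
      rw [evalq]
      rw [norm_add_sq_real, inner_smul_right, norm_smul]
      have hei : ‖e i‖ = 1 := by simp [he]
      rw [hei]
      simp [mul_pow]
      ring_nf
    rw [hL, hR]
    calc ∑ V ∈ D, ω V * ∑ i, (‖proj V (y + ε • e i)‖^2)^(m+1)
        = ∑ V ∈ D, ∑ i, ω V * (‖proj V (y + ε • e i)‖^2)^(m+1) := by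
          simp_rw [Finset.mul_sum]
      _ = ∑ i, ∑ V ∈ D, ω V * (‖proj V (y + ε • e i)‖^2)^(m+1) := Finset.sum_comm
      _ = ∑ i : Fin d, B * (‖y + ε • e i‖^2)^(m+1) :=
          Finset.sum_congr rfl fun i _ => h _
      _ = B * ∑ i, (‖y + ε • e i‖^2)^(m+1) := by rw [Finset.mul_sum]
  -- now compare coefficients of X^2
  have hc := congrArg (fun p : ℝ[X] => p.coeff 2) hFG
  simp only [hF, hG, finset_sum_coeff, coeff_C_mul] at hc
  simp_rw [coeff2q] at hc
  -- simplify the inner sums on the left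
  have hLs : ∀ V ∈ D,
      ∑ i, ((m+1 : ℝ) * (‖proj V y‖^2)^m * (‖proj V (e i)‖^2)
        + ((m+1).choose 2 : ℝ) * (‖proj V y‖^2)^(m-1) * (2*⟪proj V y, e i⟫)^2)
      = ((m:ℝ)+1) * (((k:ℝ) + 2*m) * (‖proj V y‖^2)^m) := by
    intro V hV
    rw [Finset.sum_add_distrib, ← Finset.mul_sum]
    have h1 : ∑ i, (‖proj V (e i)‖^2) = (k:ℝ) := sum_norm_proj_single V (hdim V hV)
    have h2 : ∑ i, (2*⟪proj V y, e i⟫)^2 = 4 * (‖proj V y‖^2) := by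
      simp_rw [mul_pow]
      rw [← Finset.mul_sum, sum_inner_single_sq]
      norm_num
    rw [h1]
    have h3 : ∑ i, ((m+1).choose 2 : ℝ) * (‖proj V y‖^2)^(m-1) * (2*⟪proj V y, e i⟫)^2
        = ((m+1).choose 2 : ℝ) * (‖proj V y‖^2)^(m-1) * (4 * (‖proj V y‖^2)) := by
      rw [← Finset.mul_sum, h2]
    rw [h3]
    exact alg_aux (k:ℝ) m (‖proj V y‖^2)
  have hRs : ∑ i : Fin d, ((m+1 : ℝ) * (‖y‖^2)^m * 1
        + ((m+1).choose 2 : ℝ) * (‖y‖^2)^(m-1) * (2*⟪y, e i⟫)^2)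
      = ((m:ℝ)+1) * (((d:ℝ) + 2*m) * (‖y‖^2)^m) := by
    rw [Finset.sum_add_distrib, ← Finset.mul_sum]
    have h2 : ∑ i, (2*⟪y, e i⟫)^2 = 4 * (‖y‖^2) := by
      simp_rw [mul_pow]
      rw [← Finset.mul_sum, sum_inner_single_sq]
      norm_num
    have h3 : ∑ i, ((m+1).choose 2 : ℝ) * (‖y‖^2)^(m-1) * (2*⟪y, e i⟫)^2
        = ((m+1).choose 2 : ℝ) * (‖y‖^2)^(m-1) * (4 * (‖y‖^2)) := by
      rw [← Finset.mul_sum, h2]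
    rw [h3, Finset.sum_const, Finset.card_univ, Fintype.card_fin]
    have h4 := alg_aux (d:ℝ) m (‖y‖^2)
    rw [← h4]
    push_cast
    ring
  have hL2 : ∑ V ∈ D, ω V * (∑ i, ((m+1 : ℝ) * (‖proj V y‖^2)^m * (‖proj V (e i)‖^2)
        + ((m+1).choose 2 : ℝ) * (‖proj V y‖^2)^(m-1) * (2*⟪proj V y, e i⟫)^2))
      = ∑ V ∈ D, ω V * (((m:ℝ)+1) * (((k:ℝ) + 2*m) * (‖proj V y‖^2)^m)) :=
    Finset.sum_congr rfl fun V hV => by rw [hLs V hV]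
  rw [hL2, hRs] at hc
  apply mul_left_cancel₀ (show ((m:ℝ)+1) ≠ 0 by positivity)
  calc ((m:ℝ)+1) * (((k:ℝ) + 2*m) * ∑ V ∈ D, ω V * (‖proj V y‖^2)^m)
      = ∑ V ∈ D, ω V * (((m:ℝ)+1) * (((k:ℝ) + 2*m) * (‖proj V y‖^2)^m)) := by
        rw [Finset.mul_sum, Finset.mul_sum]
        exact Finset.sum_congr rfl fun V _ => by ring
    _ = B * (((m:ℝ)+1) * (((d:ℝ) + 2*m) * (‖y‖^2)^m)) := hc
    _ = ((m:ℝ)+1) * (B * ((d:ℝ) + 2*m) * (‖y‖^2)^m) := by ring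
lemma poch_zero (a : ℝ) : poch a 0 = 1 := by simp [poch]
lemma poch_succ (a : ℝ) (n : ℕ) : poch a (n+1) = poch a n * (a + n) := by
  simp [poch, ascPochhammer_succ_eval]
lemma poch_pos {a : ℝ} (h : 0 < a) (n : ℕ) : 0 < poch a n := ascPochhammer_pos n a h

lemma prod_ratio_eq_poch (k d : ℕ) (hk : 0 < k) (hd : 0 < d) (n : ℕ) :
    ∏ i ∈ Finset.range n, (((k:ℝ)+2*i)/((d:ℝ)+2*i))
      = poch ((k:ℝ)/2) n / poch ((d:ℝ)/2) n := by
  induction n with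
  | zero => simp [poch_zero]
  | succ n ih =>
    rw [Finset.prod_range_succ, ih, poch_succ, poch_succ]
    have h1 : (0:ℝ) < poch ((d:ℝ)/2) n := poch_pos (by positivity) n
    have h2 : (0:ℝ) < (d:ℝ)/2 + n := by positivity
    have h3 : (0:ℝ) < (d:ℝ) + 2*n := by positivity
    field_simp

lemma moments (t : ℕ) (hk : 0 < k) (hd : 0 < d)
    (D : Finset (Submodule ℝ (EuclideanSpace ℝ (Fin d))))
    (hdim : ∀ V ∈ D, Module.finrank ℝ V = k)
    (ω : Submodule ℝ (EuclideanSpace ℝ (Fin d)) → ℝ)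
    (Ω : ℝ) (hΩ : Ω = ∑ V ∈ D, ω V) (A : ℝ)
    (hA : ∀ x : EuclideanSpace ℝ (Fin d),
      ∑ V ∈ D, ω V * (‖proj V x‖^2)^t = A * (‖x‖^2)^t) :
    ∀ m ≤ t, ∀ y : EuclideanSpace ℝ (Fin d),
      ∑ V ∈ D, ω V * (‖proj V y‖^2)^m
        = (Ω * (poch ((k:ℝ)/2) m / poch ((d:ℝ)/2) m)) * (‖y‖^2)^m := by
  set c : ℕ → ℝ := fun j => A * ∏ i ∈ Finset.Ico j t, (((d:ℝ)+2*i)/((k:ℝ)+2*i)) with hc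
  have down : ∀ n j, j + n = t → ∀ y : EuclideanSpace ℝ (Fin d),
      ∑ V ∈ D, ω V * (‖proj V y‖^2)^j = c j * (‖y‖^2)^j := by
    intro n
    induction n with
    | zero =>
      intro j hj y
      subst hj
      simpa [hc] using hA y
    | succ n ih =>
      intro j hj y
      have hj1 : (j+1) + n = t := by omega
      have hjt : j < t := by omega
      have hB := descent D hdim ω j (c (j+1)) (fun x => ih (j+1) hj1 x) y
      have hkj : (0:ℝ) < (k:ℝ) + 2*j := by positivity
      have hcj : c j = c (j+1) * (((d:ℝ)+2*j)/((k:ℝ)+2*j)) := by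
        rw [hc]
        simp only
        rw [Finset.prod_eq_prod_Ico_succ_bot hjt]
        ring
      rw [hcj]
      field_simp
      linarith [hB]
  have hc0 : c 0 = Ω := by
    have := down t 0 (by omega) 0
    simpa [hΩ] using this.symm
  intro m hm y
  have hdown := down (t - m) m (by omega) y
  have hsplit : (∏ i ∈ Finset.Ico 0 m, (((d:ℝ)+2*i)/((k:ℝ)+2*i))) * ∏ i ∈ Finset.Ico m t, (((d:ℝ)+2*i)/((k:ℝ)+2*i)) = ∏ i ∈ Finset.Ico 0 t, (((d:ℝ)+2*i)/((k:ℝ)+2*i)) :=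
    Finset.prod_Ico_consecutive _ (by omega) hm
  have hcm : c m = Ω * (poch ((k:ℝ)/2) m / poch ((d:ℝ)/2) m) := by
    rw [← prod_ratio_eq_poch k d hk hd m]
    have hP : ∏ i ∈ Finset.range m, (((k:ℝ)+2*i)/((d:ℝ)+2*i))
        = (∏ i ∈ Finset.Ico 0 m, (((d:ℝ)+2*i)/((k:ℝ)+2*i)))⁻¹ := by
      rw [← Finset.prod_inv_distrib, Finset.range_eq_Ico]
      exact Finset.prod_congr rfl fun i _ => by rw [inv_div]
    rw [hP, ← hc0]
    have hne : ∀ i : ℕ, (((d:ℝ)+2*i)/((k:ℝ)+2*i)) ≠ 0 := by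
      intro i
      have h1 : (0:ℝ) < (d:ℝ)+2*i := by positivity
      have h2 : (0:ℝ) < (k:ℝ)+2*i := by positivity
      positivity
    have hne0 : (∏ i ∈ Finset.Ico 0 m, (((d:ℝ)+2*i)/((k:ℝ)+2*i))) ≠ 0 :=
      Finset.prod_ne_zero_iff.mpr fun i _ => hne i
    rw [hc]
    simp only
    rw [← hsplit]
    field_simp
  rw [hdown, hcm]

end descent
end Aux

/-- Theorem: lifting weighted spherical designs through a tight
`t`-fusion frame.  Given a tight `t`-fusion frame `{(V, ω_V)}_{V ∈ D}` on `G_{k,d}`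
with `Ω = ∑ ω_V`, and for each `V ∈ D` a weighted spherical `s`-design
`(Y_V, {λ_{V,z}})` on the unit sphere of `V` (in moment form) with common total
weight `Λ`, the weighted union satisfies the spherical design moment identities on
`S^{d−1}` up to degree `r = min {s, 2t+1}`, i.e. is a weighted spherical `r`-design. -/
theorem stmt1 (t s d k : ℕ) (ht : 0 < t) (hs : 0 < s) (hk : 0 < k) (hkd : k ≤ d)
    (D : Finset (Submodule ℝ (EuclideanSpace ℝ (Fin d))))
    (hdim : ∀ V ∈ D, Module.finrank ℝ V = k)
    (ω : Submodule ℝ (EuclideanSpace ℝ (Fin d)) → ℝ)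
    (hω : ∀ V ∈ D, 0 < ω V)
    (Ω : ℝ) (hΩ : Ω = ∑ V ∈ D, ω V)
    (htff : ∃ A : ℝ, 0 < A ∧ ∀ x : EuclideanSpace ℝ (Fin d),
      ∑ V ∈ D, ω V * ‖proj V x‖ ^ (2 * t) = A * ‖x‖ ^ (2 * t))
    (Y : Submodule ℝ (EuclideanSpace ℝ (Fin d)) → Finset (EuclideanSpace ℝ (Fin d)))
    (hY : ∀ V ∈ D, ∀ z ∈ Y V, z ∈ V ∧ ‖z‖ = 1)
    (lam : Submodule ℝ (EuclideanSpace ℝ (Fin d)) → EuclideanSpace ℝ (Fin d) → ℝ)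
    (hlam : ∀ V ∈ D, ∀ z ∈ Y V, 0 < lam V z)
    (Λ : ℝ) (hΛ : ∀ V ∈ D, ∑ z ∈ Y V, lam V z = Λ)
    (hdesign : ∀ V ∈ D, ∀ y : EuclideanSpace ℝ (Fin d), ∀ m : ℕ, m ≤ s →
      ∑ z ∈ Y V, lam V z * ⟪z, proj V y⟫ ^ m =
        if Even m then
          Λ * (poch (1 / 2) (m / 2) / poch ((k : ℝ) / 2) (m / 2)) * ‖proj V y‖ ^ m
        else 0) :
    ∀ y : EuclideanSpace ℝ (Fin d), ∀ l : ℕ, l ≤ min s (2 * t + 1) →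
      ∑ V ∈ D, ∑ z ∈ Y V, ω V * lam V z * ⟪z, y⟫ ^ l =
        if Even l then
          Ω * Λ * (poch (1 / 2) (l / 2) / poch ((d : ℝ) / 2) (l / 2)) * ‖y‖ ^ l
        else 0 := by
  obtain ⟨A, hApos, hAeq⟩ := htff
  have hd : 0 < d := lt_of_lt_of_le hk hkd
  have hA' : ∀ x : EuclideanSpace ℝ (Fin d),
      ∑ V ∈ D, ω V * (‖proj V x‖^2)^t = A * (‖x‖^2)^t := by
    intro x
    have := hAeq x
    simpa [pow_mul] using this
  have hmom := moments t hk hd D hdim ω Ω hΩ A hA'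
  intro y l hl
  have hls : l ≤ s := le_trans hl (min_le_left _ _)
  have hstep : ∀ V ∈ D, ∑ z ∈ Y V, ω V * lam V z * ⟪z, y⟫ ^ l
      = ω V * ∑ z ∈ Y V, lam V z * ⟪z, proj V y⟫ ^ l := by
    intro V hV
    rw [Finset.mul_sum]
    refine Finset.sum_congr rfl fun z hz => ?_
    rw [← inner_proj_left V (hY V hV z hz).1 y]
    ring
  rw [Finset.sum_congr rfl hstep]
  have hdes : ∀ V ∈ D, ω V * ∑ z ∈ Y V, lam V z * ⟪z, proj V y⟫ ^ l
      = ω V * (if Even l then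
          Λ * (poch (1 / 2) (l / 2) / poch ((k : ℝ) / 2) (l / 2)) * ‖proj V y‖ ^ l
        else 0) := by
    intro V hV
    rw [hdesign V hV y l hls]
  rw [Finset.sum_congr rfl hdes]
  by_cases hev : Even l
  · simp only [hev, if_true]
    set m := l / 2 with hm
    have hlm : l = 2 * m := by
      rw [hm]; exact (Nat.two_mul_div_two_of_even hev).symm
    have hmt : m ≤ t := by omega
    have hnorm : ∀ V : Submodule ℝ (EuclideanSpace ℝ (Fin d)),
        ‖proj V y‖ ^ l = (‖proj V y‖^2)^m := by
      intro V; rw [hlm, pow_mul]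
    have hny : ‖y‖ ^ l = (‖y‖^2)^m := by rw [hlm, pow_mul]
    have hrw : ∀ V ∈ D, ω V * (Λ * (poch (1 / 2) m / poch ((k : ℝ) / 2) m) * ‖proj V y‖ ^ l)
        = (Λ * (poch (1 / 2) m / poch ((k : ℝ) / 2) m)) * (ω V * (‖proj V y‖^2)^m) := by
      intro V _
      rw [hnorm V]; ring
    rw [Finset.sum_congr rfl hrw, ← Finset.mul_sum, hmom m hmt y, hny]
    have hpk : poch ((k:ℝ)/2) m ≠ 0 := ne_of_gt (poch_pos (by positivity) m)
    have hpd : poch ((d:ℝ)/2) m ≠ 0 := ne_of_gt (poch_pos (by positivity) m)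
    field_simp
  · simp only [hev, if_false, mul_zero, Finset.sum_const_zero]
end

section
/- Let d be a positive integer and let a, b be integers with 1 ≤ a ≤ b and a + b ≤ d. Then for every W ∈ O^{(d)}_{a,b}, the number of tuples τ ∈ T^{(d)}_{a,b} with W_τ = W equals 4 if a < b, and equals 8 if a = b. -/
open scoped BigOperators

noncomputable def uvec {d : ℕ} (A : Finset (Fin d)) (ε : Fin d → ℝ) :
    EuclideanSpace ℝ (Fin d) :=
  (Real.sqrt A.card)⁻¹ • ∑ i ∈ A, ε i • (EuclideanSpace.single i (1 : ℝ))

def IsSign {d : ℕ} (A : Finset (Fin d)) (ε : Fin d → ℝ) : Prop :=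
  ∀ i, if i ∈ A then (ε i = 1 ∨ ε i = -1) else ε i = 1

def IsIndex (d a b : ℕ) (A B : Finset (Fin d)) (ε δ : Fin d → ℝ) : Prop :=
  Disjoint A B ∧ A.card = a ∧ B.card = b ∧ IsSign A ε ∧ IsSign B δ

noncomputable def Wspan {d : ℕ} (A B : Finset (Fin d)) (ε δ : Fin d → ℝ) :
    Submodule ℝ (EuclideanSpace ℝ (Fin d)) :=
  Submodule.span ℝ {uvec A ε, uvec B δ}

def orbitSet (d a b : ℕ) : Set (Submodule ℝ (EuclideanSpace ℝ (Fin d))) :=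
  {W | ∃ A B ε δ, IsIndex d a b A B ε δ ∧ W = Wspan A B ε δ}

/-! ### Auxiliary definitions and lemmas -/

def negOn {d : ℕ} (A : Finset (Fin d)) (ε : Fin d → ℝ) : Fin d → ℝ :=
  fun i => if i ∈ A then -ε i else 1

lemma uvec_apply {d : ℕ} (A : Finset (Fin d)) (ε : Fin d → ℝ) (k : Fin d) :
    uvec A ε k = (Real.sqrt A.card)⁻¹ * (if k ∈ A then ε k else 0) := by
  have : (∑ i ∈ A, ε i • (EuclideanSpace.single i (1 : ℝ))) k
      = ∑ i ∈ A, (ε i • (EuclideanSpace.single i (1 : ℝ))) k := by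
    simp only [WithLp.ofLp_sum, Finset.sum_apply]
  simp [uvec, this, EuclideanSpace.single_apply, mul_ite, Finset.sum_ite_eq']

lemma IsSign.mem {d : ℕ} {A : Finset (Fin d)} {ε : Fin d → ℝ} (h : IsSign A ε)
    {i : Fin d} (hi : i ∈ A) : ε i = 1 ∨ ε i = -1 := by
  have := h i; simpa [hi] using this

lemma IsSign.not_mem {d : ℕ} {A : Finset (Fin d)} {ε : Fin d → ℝ} (h : IsSign A ε)
    {i : Fin d} (hi : i ∉ A) : ε i = 1 := by
  have := h i; simpa [hi] using this

lemma IsSign.ne_zero {d : ℕ} {A : Finset (Fin d)} {ε : Fin d → ℝ} (h : IsSign A ε)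
    {i : Fin d} (hi : i ∈ A) : ε i ≠ 0 := by
  rcases h.mem hi with h1 | h1 <;> rw [h1] <;> norm_num

lemma IsSign.negOn {d : ℕ} {A : Finset (Fin d)} {ε : Fin d → ℝ} (h : IsSign A ε) :
    IsSign A (negOn A ε) := by
  intro i
  by_cases hi : i ∈ A
  · rcases h.mem hi with h1 | h1 <;> simp [_root_.negOn, hi, h1]
  · simp [_root_.negOn, hi]

lemma ne_negOn {d : ℕ} {A : Finset (Fin d)} {ε : Fin d → ℝ} (h : IsSign A ε)
    (hA : A.Nonempty) : ε ≠ negOn A ε := by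
  intro hcon
  obtain ⟨i, hi⟩ := hA
  have h1 := congrFun hcon i
  simp only [negOn, if_pos hi] at h1
  have h2 := h.ne_zero hi
  apply h2; linarith

lemma sqrt_card_ne_zero {d : ℕ} {A : Finset (Fin d)} (hA : A.Nonempty) :
    (Real.sqrt A.card) ≠ 0 := by
  have : (0 : ℝ) < A.card := by exact_mod_cast Finset.card_pos.2 hA
  positivity

lemma uvec_negOn {d : ℕ} (A : Finset (Fin d)) (ε : Fin d → ℝ) :
    uvec A (negOn A ε) = -uvec A ε := by
  ext k
  simp only [PiLp.neg_apply, uvec_apply, negOn]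
  by_cases hk : k ∈ A <;> simp [hk]

lemma span_pair_neg_left {M : Type*} [AddCommGroup M] [Module ℝ M] (x y : M) :
    Submodule.span ℝ {-x, y} = Submodule.span ℝ {x, y} := by
  apply le_antisymm <;> rw [Submodule.span_le] <;>
    rw [Set.insert_subset_iff, Set.singleton_subset_iff]
  · refine ⟨?_, Submodule.subset_span (by simp)⟩
    exact Submodule.neg_mem _ (Submodule.subset_span (by simp))
  · constructor
    · rw [show x = -(-x) from (neg_neg x).symm]
      exact Submodule.neg_mem _ (Submodule.subset_span (by simp))
    · exact Submodule.subset_span (by simp)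

lemma span_pair_neg_right {M : Type*} [AddCommGroup M] [Module ℝ M] (x y : M) :
    Submodule.span ℝ {x, -y} = Submodule.span ℝ {x, y} := by
  rw [Set.pair_comm x (-y), Set.pair_comm x y]; exact span_pair_neg_left y x

lemma Wspan_comm {d : ℕ} (A B : Finset (Fin d)) (ε δ : Fin d → ℝ) :
    Wspan B A δ ε = Wspan A B ε δ := by
  unfold Wspan; rw [Set.pair_comm]

lemma Wspan_negOn_left {d : ℕ} (A B : Finset (Fin d)) (ε δ : Fin d → ℝ) :
    Wspan A B (negOn A ε) δ = Wspan A B ε δ := by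
  unfold Wspan; rw [uvec_negOn, span_pair_neg_left]

lemma Wspan_negOn_right {d : ℕ} (A B : Finset (Fin d)) (ε δ : Fin d → ℝ) :
    Wspan A B ε (negOn B δ) = Wspan A B ε δ := by
  unfold Wspan; rw [uvec_negOn, span_pair_neg_right]

lemma sign_prop {d : ℕ} {A : Finset (Fin d)} {γ δ : Fin d → ℝ}
    (hγ : IsSign A γ) (hδ : IsSign A δ) (hA : A.Nonempty) {c t : ℝ} (hc : c ≠ 0)
    (h : ∀ i ∈ A, c * γ i = t * δ i) : γ = δ ∨ γ = negOn A δ := by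
  obtain ⟨i₀, hi₀⟩ := hA
  have hprod : ∀ i ∈ A, γ i * δ i = γ i₀ * δ i₀ := by
    intro i hi
    have h1 : c * (γ i * δ i) = t := by
      have hd2 : δ i * δ i = 1 := by
        rcases hδ.mem hi with h2 | h2 <;> rw [h2] <;> norm_num
      calc c * (γ i * δ i) = (c * γ i) * δ i := by ring
        _ = (t * δ i) * δ i := by rw [h i hi]
        _ = t * (δ i * δ i) := by ring
        _ = t := by rw [hd2]; ring
    have h2 : c * (γ i₀ * δ i₀) = t := by
      have hd2 : δ i₀ * δ i₀ = 1 := by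
        rcases hδ.mem hi₀ with h2 | h2 <;> rw [h2] <;> norm_num
      calc c * (γ i₀ * δ i₀) = (c * γ i₀) * δ i₀ := by ring
        _ = (t * δ i₀) * δ i₀ := by rw [h i₀ hi₀]
        _ = t * (δ i₀ * δ i₀) := by ring
        _ = t := by rw [hd2]; ring
    exact mul_left_cancel₀ hc (h1.trans h2.symm)
  rcases hγ.mem hi₀ with hg | hg <;> rcases hδ.mem hi₀ with hd | hd
  · -- product 1
    left
    funext i
    by_cases hi : i ∈ A
    · have := hprod i hi
      rw [hg, hd] at this
      rcases hγ.mem hi with h1 | h1 <;> rcases hδ.mem hi with h2 | h2 <;>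
        rw [h1, h2] <;> rw [h1, h2] at this <;> linarith
    · rw [hγ.not_mem hi, hδ.not_mem hi]
  · right
    funext i
    by_cases hi : i ∈ A
    · have := hprod i hi
      rw [hg, hd] at this
      simp only [negOn, if_pos hi]
      rcases hγ.mem hi with h1 | h1 <;> rcases hδ.mem hi with h2 | h2 <;>
        rw [h1, h2] <;> rw [h1, h2] at this <;> linarith
    · rw [hγ.not_mem hi]; simp [negOn, hi]
  · right
    funext i
    by_cases hi : i ∈ A
    · have := hprod i hi
      rw [hg, hd] at this
      simp only [negOn, if_pos hi]
      rcases hγ.mem hi with h1 | h1 <;> rcases hδ.mem hi with h2 | h2 <;>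
        rw [h1, h2] <;> rw [h1, h2] at this <;> linarith
    · rw [hγ.not_mem hi]; simp [negOn, hi]
  · left
    funext i
    by_cases hi : i ∈ A
    · have := hprod i hi
      rw [hg, hd] at this
      rcases hγ.mem hi with h1 | h1 <;> rcases hδ.mem hi with h2 | h2 <;>
        rw [h1, h2] <;> rw [h1, h2] at this <;> linarith
    · rw [hγ.not_mem hi, hδ.not_mem hi]

/-- Key extraction lemma: a "sign vector" in the span of two disjoint sign vectors
must be (up to global sign) one of them. -/
lemma key {d : ℕ} {A B C : Finset (Fin d)} {ε δ γ : Fin d → ℝ}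
    (hdis : Disjoint A B) (hA : A.Nonempty) (hB : B.Nonempty) (hC : C.Nonempty)
    (hε : IsSign A ε) (hδ : IsSign B δ) (hγ : IsSign C γ)
    (hcard : C.card < A.card + B.card)
    (hmem : uvec C γ ∈ Wspan A B ε δ) :
    (C = A ∧ (γ = ε ∨ γ = negOn A ε)) ∨ (C = B ∧ (γ = δ ∨ γ = negOn B δ)) := by
  obtain ⟨s, t, hst⟩ := Submodule.mem_span_pair.1 hmem
  set c : ℝ := (Real.sqrt C.card)⁻¹ with hcdef
  have hc : c ≠ 0 := inv_ne_zero (sqrt_card_ne_zero hC)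
  set s' : ℝ := s * (Real.sqrt A.card)⁻¹ with hs'def
  set t' : ℝ := t * (Real.sqrt B.card)⁻¹ with ht'def
  have hval : ∀ k, c * (if k ∈ C then γ k else 0) =
      s' * (if k ∈ A then ε k else 0) + t' * (if k ∈ B then δ k else 0) := by
    intro k
    have h0 : (s • uvec A ε + t • uvec B δ) k = uvec C γ k := by rw [hst]
    simp only [PiLp.add_apply, PiLp.smul_apply, smul_eq_mul, uvec_apply] at h0
    rw [← h0]; ring
  -- membership characterizations
  have hCval : ∀ k ∈ C, c * γ k =
      s' * (if k ∈ A then ε k else 0) + t' * (if k ∈ B then δ k else 0) := by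
    intro k hk; have := hval k; rwa [if_pos hk] at this
  have hnotC : ∀ k, k ∉ C →
      s' * (if k ∈ A then ε k else 0) + t' * (if k ∈ B then δ k else 0) = 0 := by
    intro k hk; have := hval k; rw [if_neg hk, mul_zero] at this; exact this.symm
  by_cases hs : s' = 0 <;> by_cases ht : t' = 0
  · -- both zero: contradiction
    exfalso
    obtain ⟨i, hi⟩ := hC
    have := hCval i hi
    rw [hs, ht] at this
    simp only [zero_mul, add_zero] at this
    exact (mul_ne_zero hc (hγ.ne_zero hi)) this
  · -- s' = 0, t' ≠ 0 : C = B
    have hCB : C = B := by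
      ext k
      constructor
      · intro hk
        by_contra hkB
        have := hCval k hk
        rw [hs, if_neg hkB] at this
        simp only [zero_mul, mul_zero, add_zero, zero_add] at this
        exact (mul_ne_zero hc (hγ.ne_zero hk)) this
      · intro hk
        by_contra hkC
        have := hnotC k hkC
        rw [hs, if_pos hk] at this
        simp only [zero_mul, zero_add] at this
        exact (mul_ne_zero ht (hδ.ne_zero hk)) this
    right
    refine ⟨hCB, ?_⟩
    apply sign_prop (hCB ▸ hγ) hδ hB hc
    intro i hi
    have hiC : i ∈ C := hCB ▸ hi
    have hiA : i ∉ A := fun h => (Finset.disjoint_left.1 hdis h) hi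
    have := hCval i hiC
    rwa [hs, if_neg hiA, if_pos hi, zero_mul, zero_add] at this
  · -- t' = 0, s' ≠ 0 : C = A
    have hCA : C = A := by
      ext k
      constructor
      · intro hk
        by_contra hkA
        have := hCval k hk
        rw [ht, if_neg hkA] at this
        simp only [zero_mul, mul_zero, add_zero] at this
        exact (mul_ne_zero hc (hγ.ne_zero hk)) this
      · intro hk
        by_contra hkC
        have := hnotC k hkC
        rw [ht, if_pos hk] at this
        simp only [zero_mul, add_zero] at this
        exact (mul_ne_zero hs (hε.ne_zero hk)) this
    left
    refine ⟨hCA, ?_⟩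
    apply sign_prop (hCA ▸ hγ) hε hA hc
    intro i hi
    have hiC : i ∈ C := hCA ▸ hi
    have hiB : i ∉ B := fun h => (Finset.disjoint_left.1 hdis hi) h
    have := hCval i hiC
    rwa [ht, if_pos hi, if_neg hiB, zero_mul, add_zero] at this
  · -- both nonzero: contradiction with cards
    exfalso
    have hsub : A ∪ B ⊆ C := by
      intro k hk
      by_contra hkC
      have := hnotC k hkC
      rcases Finset.mem_union.1 hk with hkA | hkB
      · have hkB : k ∉ B := fun h => (Finset.disjoint_left.1 hdis hkA) h
        rw [if_pos hkA, if_neg hkB, mul_zero, add_zero] at this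
        exact (mul_ne_zero hs (hε.ne_zero hkA)) this
      · have hkA : k ∉ A := fun h => (Finset.disjoint_left.1 hdis h) hkB
        rw [if_neg hkA, if_pos hkB, mul_zero, zero_add] at this
        exact (mul_ne_zero ht (hδ.ne_zero hkB)) this
    have := Finset.card_le_card hsub
    rw [Finset.card_union_of_disjoint hdis] at this
    omega

/-- for every `W ∈ O^{(d)}_{a,b}`, the number of tuples
`τ = (A, B, ε, δ) ∈ T^{(d)}_{a,b}` with `W_τ = W` is `4` if `a < b` and `8` if
`a = b`. -/
theorem stmt7 (d a b : ℕ) (hd : 0 < d) (ha : 1 ≤ a) (hab : a ≤ b) (habd : a + b ≤ d)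
    (W : Submodule ℝ (EuclideanSpace ℝ (Fin d))) (hW : W ∈ orbitSet d a b) :
    Nat.card {q : Finset (Fin d) × Finset (Fin d) × (Fin d → ℝ) × (Fin d → ℝ) //
        IsIndex d a b q.1 q.2.1 q.2.2.1 q.2.2.2 ∧
          Wspan q.1 q.2.1 q.2.2.1 q.2.2.2 = W} =
      if a < b then 4 else 8 := by
  obtain ⟨A, B, ε, δ, hidx, rfl⟩ := hW
  obtain ⟨hdis, hcA, hcB, hε, hδ⟩ := hidx
  have hAne : A.Nonempty := Finset.card_pos.1 (by omega)
  have hBne : B.Nonempty := Finset.card_pos.1 (by omega)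
  have hAB : A ≠ B := by
    intro h
    rw [h] at hdis
    exact hBne.ne_empty (by simpa using disjoint_self.1 hdis)
  have hne1 : ε ≠ negOn A ε := ne_negOn hε hAne
  have hne2 : δ ≠ negOn B δ := ne_negOn hδ hBne
  -- classification of fiber elements
  have classify : ∀ q : Finset (Fin d) × Finset (Fin d) × (Fin d → ℝ) × (Fin d → ℝ),
      IsIndex d a b q.1 q.2.1 q.2.2.1 q.2.2.2 →
      Wspan q.1 q.2.1 q.2.2.1 q.2.2.2 = Wspan A B ε δ →
      (q = (A, B, ε, δ) ∨ q = (A, B, negOn A ε, δ) ∨ q = (A, B, ε, negOn B δ) ∨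
        q = (A, B, negOn A ε, negOn B δ)) ∨
      (a = b ∧ (q = (B, A, δ, ε) ∨ q = (B, A, negOn B δ, ε) ∨ q = (B, A, δ, negOn A ε) ∨
        q = (B, A, negOn B δ, negOn A ε))) := by
    rintro ⟨A', B', ε', δ'⟩ ⟨hdis', hcA', hcB', hε', hδ'⟩ hw
    simp only at hcA' hcB' hε' hδ' hw ⊢
    have hA'ne : A'.Nonempty := Finset.card_pos.1 (by omega)
    have hB'ne : B'.Nonempty := Finset.card_pos.1 (by omega)
    have hA'B' : A' ≠ B' := by
      intro h
      rw [h] at hdis'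
      exact hB'ne.ne_empty (by simpa using disjoint_self.1 hdis')
    have hu'mem : uvec A' ε' ∈ Wspan A B ε δ := by
      rw [← hw]; exact Submodule.subset_span (Set.mem_insert _ _)
    have hv'mem : uvec B' δ' ∈ Wspan A B ε δ := by
      rw [← hw]; exact Submodule.subset_span (Set.mem_insert_of_mem _ rfl)
    have ku := key hdis hAne hBne hA'ne hε hδ hε' (by omega) hu'mem
    have kv := key hdis hAne hBne hB'ne hε hδ hδ' (by omega) hv'mem
    rcases ku with ⟨hA'A, hee⟩ | ⟨hA'B, hee⟩
    · rcases kv with ⟨hB'A, _⟩ | ⟨hB'B, hdd⟩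
      · exact absurd (hA'A.trans hB'A.symm) hA'B'
      · subst hA'A; subst hB'B
        left
        rcases hee with rfl | rfl <;> rcases hdd with rfl | rfl <;> tauto
    · rcases kv with ⟨hB'A, hdd⟩ | ⟨hB'B, _⟩
      · subst hA'B; subst hB'A
        right
        refine ⟨by omega, ?_⟩
        rcases hee with rfl | rfl <;> rcases hdd with rfl | rfl <;> tauto
      · exact absurd (hA'B.trans hB'B.symm) hA'B'
  -- distinctness
  have hd12 : ((A, B, ε, δ) : Finset (Fin d) × Finset (Fin d) × (Fin d → ℝ) × (Fin d → ℝ))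
      ≠ (A, B, negOn A ε, δ) := fun h => hne1 (congrArg (fun q => q.2.2.1) h)
  have hd13 : ((A, B, ε, δ) : Finset (Fin d) × Finset (Fin d) × (Fin d → ℝ) × (Fin d → ℝ))
      ≠ (A, B, ε, negOn B δ) := fun h => hne2 (congrArg (fun q => q.2.2.2) h)
  have hd14 : ((A, B, ε, δ) : Finset (Fin d) × Finset (Fin d) × (Fin d → ℝ) × (Fin d → ℝ))
      ≠ (A, B, negOn A ε, negOn B δ) := fun h => hne1 (congrArg (fun q => q.2.2.1) h)
  have hd23 : ((A, B, negOn A ε, δ) : Finset (Fin d) × Finset (Fin d) × (Fin d → ℝ) × (Fin d → ℝ))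
      ≠ (A, B, ε, negOn B δ) := fun h => hne1 (congrArg (fun q => q.2.2.1) h).symm
  have hd24 : ((A, B, negOn A ε, δ) : Finset (Fin d) × Finset (Fin d) × (Fin d → ℝ) × (Fin d → ℝ))
      ≠ (A, B, negOn A ε, negOn B δ) := fun h => hne2 (congrArg (fun q => q.2.2.2) h)
  have hd34 : ((A, B, ε, negOn B δ) : Finset (Fin d) × Finset (Fin d) × (Fin d → ℝ) × (Fin d → ℝ))
      ≠ (A, B, negOn A ε, negOn B δ) := fun h => hne1 (congrArg (fun q => q.2.2.1) h)
  rcases lt_or_eq_of_le hab with hlt | heq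
  · -- case a < b
    have hSeq : {q : Finset (Fin d) × Finset (Fin d) × (Fin d → ℝ) × (Fin d → ℝ) |
        IsIndex d a b q.1 q.2.1 q.2.2.1 q.2.2.2 ∧
          Wspan q.1 q.2.1 q.2.2.1 q.2.2.2 = Wspan A B ε δ} =
        {(A, B, ε, δ), (A, B, negOn A ε, δ), (A, B, ε, negOn B δ),
          (A, B, negOn A ε, negOn B δ)} := by
      ext q
      simp only [Set.mem_setOf_eq, Set.mem_insert_iff, Set.mem_singleton_iff]
      constructor
      · rintro ⟨hi, hw⟩
        rcases classify q hi hw with h | ⟨hab', _⟩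
        · exact h
        · omega
      · rintro (rfl | rfl | rfl | rfl)
        · exact ⟨⟨hdis, hcA, hcB, hε, hδ⟩, rfl⟩
        · exact ⟨⟨hdis, hcA, hcB, hε.negOn, hδ⟩, Wspan_negOn_left A B ε δ⟩
        · exact ⟨⟨hdis, hcA, hcB, hε, hδ.negOn⟩, Wspan_negOn_right A B ε δ⟩
        · exact ⟨⟨hdis, hcA, hcB, hε.negOn, hδ.negOn⟩, by
            rw [Wspan_negOn_left, Wspan_negOn_right]⟩
    rw [if_pos hlt]
    have hcoe : Nat.card {q : Finset (Fin d) × Finset (Fin d) × (Fin d → ℝ) × (Fin d → ℝ) //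
        IsIndex d a b q.1 q.2.1 q.2.2.1 q.2.2.2 ∧
          Wspan q.1 q.2.1 q.2.2.1 q.2.2.2 = Wspan A B ε δ} =
        ({(A, B, ε, δ), (A, B, negOn A ε, δ), (A, B, ε, negOn B δ),
          (A, B, negOn A ε, negOn B δ)} : Set _).ncard := by
      rw [← hSeq]; exact Nat.card_coe_set_eq _
    rw [hcoe]
    rw [Set.ncard_insert_of_notMem (by
        simp only [Set.mem_insert_iff, Set.mem_singleton_iff]
        push_neg
        exact ⟨hd12, hd13, hd14⟩)
      ((Set.finite_singleton _).insert _ |>.insert _)]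
    rw [Set.ncard_insert_of_notMem (by
        simp only [Set.mem_insert_iff, Set.mem_singleton_iff]
        push_neg
        exact ⟨hd23, hd24⟩)
      ((Set.finite_singleton _).insert _)]
    rw [Set.ncard_pair hd34]
  · -- case a = b
    have hd15 : ((A, B, ε, δ) : Finset (Fin d) × Finset (Fin d) × (Fin d → ℝ) × (Fin d → ℝ))
        ≠ (B, A, δ, ε) := fun h => hAB (congrArg (fun q => q.1) h)
    have hne3 : δ ≠ negOn B δ := hne2
    have hne4 : ε ≠ negOn A ε := hne1
    have hd56 : ((B, A, δ, ε) : Finset (Fin d) × Finset (Fin d) × (Fin d → ℝ) × (Fin d → ℝ))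
        ≠ (B, A, negOn B δ, ε) := fun h => hne2 (congrArg (fun q => q.2.2.1) h)
    have hd57 : ((B, A, δ, ε) : Finset (Fin d) × Finset (Fin d) × (Fin d → ℝ) × (Fin d → ℝ))
        ≠ (B, A, δ, negOn A ε) := fun h => hne1 (congrArg (fun q => q.2.2.2) h)
    have hd58 : ((B, A, δ, ε) : Finset (Fin d) × Finset (Fin d) × (Fin d → ℝ) × (Fin d → ℝ))
        ≠ (B, A, negOn B δ, negOn A ε) := fun h => hne2 (congrArg (fun q => q.2.2.1) h)
    have hd67 : ((B, A, negOn B δ, ε) : Finset (Fin d) × Finset (Fin d) × (Fin d → ℝ) × (Fin d → ℝ))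
        ≠ (B, A, δ, negOn A ε) := fun h => hne2 (congrArg (fun q => q.2.2.1) h).symm
    have hd68 : ((B, A, negOn B δ, ε) : Finset (Fin d) × Finset (Fin d) × (Fin d → ℝ) × (Fin d → ℝ))
        ≠ (B, A, negOn B δ, negOn A ε) := fun h => hne1 (congrArg (fun q => q.2.2.2) h)
    have hd78 : ((B, A, δ, negOn A ε) : Finset (Fin d) × Finset (Fin d) × (Fin d → ℝ) × (Fin d → ℝ))
        ≠ (B, A, negOn B δ, negOn A ε) := fun h => hne2 (congrArg (fun q => q.2.2.1) h)
    have crossne : ∀ (x y : (Fin d → ℝ) × (Fin d → ℝ)) (z w : (Fin d → ℝ) × (Fin d → ℝ)),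
        ((A, B, x.1, x.2) : Finset (Fin d) × Finset (Fin d) × (Fin d → ℝ) × (Fin d → ℝ))
          ≠ (B, A, z.1, z.2) := fun x y z w h => hAB (congrArg (fun q => q.1) h)
    have hIsw : IsIndex d a b B A δ ε :=
      ⟨hdis.symm, by omega, by omega, hδ, hε⟩
    have hSeq : {q : Finset (Fin d) × Finset (Fin d) × (Fin d → ℝ) × (Fin d → ℝ) |
        IsIndex d a b q.1 q.2.1 q.2.2.1 q.2.2.2 ∧
          Wspan q.1 q.2.1 q.2.2.1 q.2.2.2 = Wspan A B ε δ} =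
        {(A, B, ε, δ), (A, B, negOn A ε, δ), (A, B, ε, negOn B δ),
          (A, B, negOn A ε, negOn B δ), (B, A, δ, ε), (B, A, negOn B δ, ε),
          (B, A, δ, negOn A ε), (B, A, negOn B δ, negOn A ε)} := by
      ext q
      simp only [Set.mem_setOf_eq, Set.mem_insert_iff, Set.mem_singleton_iff]
      constructor
      · rintro ⟨hi, hw⟩
        rcases classify q hi hw with h | ⟨_, h⟩ <;> tauto
      · rintro (rfl | rfl | rfl | rfl | rfl | rfl | rfl | rfl)
        · exact ⟨⟨hdis, hcA, hcB, hε, hδ⟩, rfl⟩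
        · exact ⟨⟨hdis, hcA, hcB, hε.negOn, hδ⟩, Wspan_negOn_left A B ε δ⟩
        · exact ⟨⟨hdis, hcA, hcB, hε, hδ.negOn⟩, Wspan_negOn_right A B ε δ⟩
        · exact ⟨⟨hdis, hcA, hcB, hε.negOn, hδ.negOn⟩, by
            rw [Wspan_negOn_left, Wspan_negOn_right]⟩
        · exact ⟨hIsw, Wspan_comm A B ε δ⟩
        · exact ⟨⟨hdis.symm, by show B.card = a; omega, by show A.card = b; omega, hδ.negOn, hε⟩, by
            rw [Wspan_negOn_left, Wspan_comm]⟩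
        · exact ⟨⟨hdis.symm, by show B.card = a; omega, by show A.card = b; omega, hδ, hε.negOn⟩, by
            rw [Wspan_negOn_right, Wspan_comm]⟩
        · exact ⟨⟨hdis.symm, by show B.card = a; omega, by show A.card = b; omega, hδ.negOn, hε.negOn⟩, by
            rw [Wspan_negOn_left, Wspan_negOn_right, Wspan_comm]⟩
    rw [if_neg (by omega)]
    have hcoe : Nat.card {q : Finset (Fin d) × Finset (Fin d) × (Fin d → ℝ) × (Fin d → ℝ) //
        IsIndex d a b q.1 q.2.1 q.2.2.1 q.2.2.2 ∧
          Wspan q.1 q.2.1 q.2.2.1 q.2.2.2 = Wspan A B ε δ} =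
        ({(A, B, ε, δ), (A, B, negOn A ε, δ), (A, B, ε, negOn B δ),
          (A, B, negOn A ε, negOn B δ), (B, A, δ, ε), (B, A, negOn B δ, ε),
          (B, A, δ, negOn A ε), (B, A, negOn B δ, negOn A ε)} : Set _).ncard := by
      rw [← hSeq]; exact Nat.card_coe_set_eq _
    rw [hcoe]
    have hBA : ∀ (x y z w : Fin d → ℝ),
        ((A, B, x, y) : Finset (Fin d) × Finset (Fin d) × (Fin d → ℝ) × (Fin d → ℝ))
          ≠ (B, A, z, w) := fun x y z w h => hAB (congrArg (fun q => q.1) h)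
    rw [Set.ncard_insert_of_notMem (by
        simp only [Set.mem_insert_iff, Set.mem_singleton_iff]
        push_neg
        exact ⟨hd12, hd13, hd14, hBA _ _ _ _, hBA _ _ _ _, hBA _ _ _ _, hBA _ _ _ _⟩)
      (((((((Set.finite_singleton _).insert _).insert _).insert _).insert _).insert _).insert _)]
    rw [Set.ncard_insert_of_notMem (by
        simp only [Set.mem_insert_iff, Set.mem_singleton_iff]
        push_neg
        exact ⟨hd23, hd24, hBA _ _ _ _, hBA _ _ _ _, hBA _ _ _ _, hBA _ _ _ _⟩)
      ((((((Set.finite_singleton _).insert _).insert _).insert _).insert _).insert _)]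
    rw [Set.ncard_insert_of_notMem (by
        simp only [Set.mem_insert_iff, Set.mem_singleton_iff]
        push_neg
        exact ⟨hd34, hBA _ _ _ _, hBA _ _ _ _, hBA _ _ _ _, hBA _ _ _ _⟩)
      (((((Set.finite_singleton _).insert _).insert _).insert _).insert _)]
    rw [Set.ncard_insert_of_notMem (by
        simp only [Set.mem_insert_iff, Set.mem_singleton_iff]
        push_neg
        exact ⟨hBA _ _ _ _, hBA _ _ _ _, hBA _ _ _ _, hBA _ _ _ _⟩)
      ((((Set.finite_singleton _).insert _).insert _).insert _)]
    rw [Set.ncard_insert_of_notMem (by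
        simp only [Set.mem_insert_iff, Set.mem_singleton_iff]
        push_neg
        exact ⟨hd56, hd57, hd58⟩)
      (((Set.finite_singleton _).insert _).insert _)]
    rw [Set.ncard_insert_of_notMem (by
        simp only [Set.mem_insert_iff, Set.mem_singleton_iff]
        push_neg
        exact ⟨hd67, hd68⟩)
      ((Set.finite_singleton _).insert _)]
    rw [Set.ncard_pair hd78]
end

section
/- Let d ≥ 4 and let X = {V_1, …, V_N} be a family of N ≥ 2 pairwise distinct 2-dimensional linear subspaces of ℝ^d that is equi-chordal and is an equal-weight tight 2-fusion frame. Then 4N = d^2 if and only if X is equi-isoclinic, i.e. there exists y ∈ [0,1] such that tr(P_{V_i}P_{V_j}) = 2y and tr((P_{V_i}P_{V_j})^2) = 2y^2 for all i ≠ j. -/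
open scoped BigOperators

/-- `tr(P_V P_W)`. -/
noncomputable def trP {d : ℕ} (V W : Submodule ℝ (EuclideanSpace ℝ (Fin d))) : ℝ :=
  LinearMap.trace ℝ (EuclideanSpace ℝ (Fin d)) (proj V ∘ₗ proj W)

/-- `tr((P_V P_W)²)`. -/
noncomputable def trP2 {d : ℕ} (V W : Submodule ℝ (EuclideanSpace ℝ (Fin d))) : ℝ :=
  LinearMap.trace ℝ (EuclideanSpace ℝ (Fin d)) ((proj V ∘ₗ proj W) ∘ₗ (proj V ∘ₗ proj W))

open scoped RealInnerProductSpace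

section AuxSec

variable {d : ℕ}

local notation "E" => EuclideanSpace ℝ (Fin d)

lemma proj_symm (V : Submodule ℝ E) (x y : E) : ⟪x, proj V y⟫ = ⟪proj V x, y⟫ :=
  (V.inner_starProjection_left_eq_right x y).symm

lemma proj_proj (V : Submodule ℝ E) (x : E) : proj V (proj V x) = proj V x := by
  show (V.orthogonalProjectionOnto ((V.orthogonalProjectionOnto x : E)) : E) = _
  rw [Submodule.orthogonalProjectionOnto_mem_subspace_eq_self]
  rfl

lemma inner_proj_self (V : Submodule ℝ E) (x : E) : ⟪x, proj V x⟫ = ‖proj V x‖ ^ 2 := by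
  rw [← proj_proj V x, proj_symm, proj_proj, real_inner_self_eq_norm_sq]

lemma norm_proj_le (V : Submodule ℝ E) (x : E) : ‖proj V x‖ ≤ ‖x‖ := by
  have h := inner_proj_self V x
  have h2 : ⟪x, proj V x⟫ ≤ ‖x‖ * ‖proj V x‖ := real_inner_le_norm x _
  nlinarith [norm_nonneg (proj V x), norm_nonneg x]

lemma inner_coord (u v : E) : ⟪u, v⟫ = ∑ m, u m * v m := by
  simp [PiLp.inner_apply]
  exact Finset.sum_congr rfl fun m _ => mul_comm _ _

lemma trace_eq_sum_coord (L : E →ₗ[ℝ] E) :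
    LinearMap.trace ℝ E L = ∑ k, L ((EuclideanSpace.basisFun (Fin d) ℝ).toBasis k) k := by
  rw [LinearMap.trace_eq_matrix_trace ℝ (EuclideanSpace.basisFun (Fin d) ℝ).toBasis]
  simp [Matrix.trace, Matrix.diag, LinearMap.toMatrix_apply]

lemma trace_eq_sum_inner (L : E →ₗ[ℝ] E) :
    LinearMap.trace ℝ E L =
      ∑ m, ⟪EuclideanSpace.single m (1:ℝ), L (EuclideanSpace.single m 1)⟫ := by
  rw [trace_eq_sum_coord]
  refine Finset.sum_congr rfl fun m _ => ?_
  rw [show ((EuclideanSpace.basisFun (Fin d) ℝ).toBasis m) = EuclideanSpace.single m (1:ℝ) by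
    simp [EuclideanSpace.basisFun_apply]]
  rw [EuclideanSpace.inner_single_left]
  simp

lemma trP_eq (V W : Submodule ℝ E) (w : Fin 2 → E)
    (hpW : ∀ x, proj W x = ∑ k, ⟪w k, x⟫ • w k) :
    trP V W = ∑ k, ⟪w k, proj V (w k)⟫ := by
  rw [trP, trace_eq_sum_inner]
  simp only [LinearMap.comp_apply, hpW, map_sum, map_smul, inner_sum, inner_smul_right,
    EuclideanSpace.inner_single_left, EuclideanSpace.inner_single_right, map_one, one_mul,
    RCLike.star_def, conj_trivial]
  rw [Finset.sum_comm]
  refine Finset.sum_congr rfl fun k _ => ?_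
  rw [inner_coord]

lemma trP2_eq (V W : Submodule ℝ E) (w : Fin 2 → E)
    (hpW : ∀ x, proj W x = ∑ k, ⟪w k, x⟫ • w k) :
    trP2 V W = ∑ k, ∑ l, ⟪w k, proj V (w l)⟫ * ⟪w l, proj V (w k)⟫ := by
  rw [trP2, trace_eq_sum_inner]
  simp only [LinearMap.comp_apply, hpW, map_sum, map_smul, inner_sum, inner_smul_right,
    EuclideanSpace.inner_single_left, EuclideanSpace.inner_single_right, map_one, one_mul,
    RCLike.star_def, conj_trivial, Finset.mul_sum, Finset.sum_mul]
  rw [Finset.sum_comm]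
  refine Finset.sum_congr rfl fun k _ => ?_
  rw [Finset.sum_comm]
  refine Finset.sum_congr rfl fun l _ => ?_
  rw [inner_coord (w k) (proj V (w l))]
  rw [Finset.sum_mul]
  refine Finset.sum_congr rfl fun m _ => ?_
  ring

lemma trP2_eq' (V W : Submodule ℝ E) (w : Fin 2 → E)
    (hpW : ∀ x, proj W x = ∑ k, ⟪w k, x⟫ • w k) :
    trP2 V W = ∑ k, ∑ l, ⟪w k, proj V (w l)⟫ ^ 2 := by
  rw [trP2_eq V W w hpW]
  refine Finset.sum_congr rfl fun k _ => Finset.sum_congr rfl fun l _ => ?_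
  have h : ⟪w l, proj V (w k)⟫ = ⟪w k, proj V (w l)⟫ := by
    rw [proj_symm, real_inner_comm]
  rw [h]; ring

lemma exists_w (V : Submodule ℝ E) (hV2 : Module.finrank ℝ V = 2) :
    ∃ w : Fin 2 → E, Orthonormal ℝ w ∧ ∀ x, proj V x = ∑ k, ⟪w k, x⟫ • w k := by
  let b := (stdOrthonormalBasis ℝ V).reindex (finCongr hV2)
  refine ⟨fun k => (b k : E), ?_, ?_⟩
  · rw [orthonormal_iff_ite]
    intro i j
    rw [← Submodule.coe_inner]
    exact orthonormal_iff_ite.1 b.orthonormal i j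
  · intro x
    show (V.orthogonalProjectionOnto x : E) = _
    rw [b.orthogonalProjectionOnto_apply_eq_sum x]
    push_cast
    rfl

lemma sum_sq_coord (V : Submodule ℝ E) (x : E) :
    ∑ m, ⟪x, proj V (EuclideanSpace.single m (1:ℝ))⟫ ^ 2 = ⟪x, proj V x⟫ := by
  have h : ∀ m : Fin d, ⟪x, proj V (EuclideanSpace.single m (1:ℝ))⟫ = proj V x m := by
    intro m
    rw [proj_symm, EuclideanSpace.inner_single_right]
    simp
  simp only [h]
  rw [inner_proj_self, ← real_inner_self_eq_norm_sq, inner_coord]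
  refine Finset.sum_congr rfl fun m _ => by ring

lemma tr_proj (V : Submodule ℝ E) (w : Fin 2 → E) (hw : Orthonormal ℝ w)
    (hpV : ∀ x, proj V x = ∑ k, ⟪w k, x⟫ • w k) :
    ∑ m, ⟪EuclideanSpace.single m (1:ℝ), proj V (EuclideanSpace.single m 1)⟫ = 2 := by
  simp only [hpV, inner_sum, inner_smul_right, EuclideanSpace.inner_single_left,
    EuclideanSpace.inner_single_right, map_one, one_mul, RCLike.star_def, conj_trivial]
  rw [Finset.sum_comm]
  have h1 : ∀ k : Fin 2, (∑ m : Fin d, w k m * w k m) = 1 := by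
    intro k
    rw [← inner_coord, real_inner_self_eq_norm_sq, hw.1 k]
    norm_num
  rw [Finset.sum_congr rfl fun k _ => h1 k]
  simp

end AuxSec

/-- for an `ECTFF₂` on `G_{2,d}` (`d ≥ 4`, `N ≥ 2` pairwise distinct
2-dimensional subspaces, equi-chordal and an equal-weight tight 2-fusion frame),
equality `4N = d²` holds iff the family is equi-isoclinic, i.e. there is
`y ∈ [0,1]` with `tr(P_{V_i}P_{V_j}) = 2y` and `tr((P_{V_i}P_{V_j})²) = 2y²` for
all `i ≠ j`. -/
theorem stmt17 (d N : ℕ) (hd : 4 ≤ d) (hN : 2 ≤ N)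
    (V : Fin N → Submodule ℝ (EuclideanSpace ℝ (Fin d)))
    (hinj : Function.Injective V)
    (hdim : ∀ i, Module.finrank ℝ (V i) = 2)
    (hec : ∃ c : ℝ, ∀ i j, i ≠ j → trP (V i) (V j) = c)
    (htff : ∃ A : ℝ, 0 < A ∧ ∀ x : EuclideanSpace ℝ (Fin d),
      ∑ i, ‖proj (V i) x‖ ^ 4 = A * ‖x‖ ^ 4) :
    4 * N = d ^ 2 ↔
      ∃ y : ℝ, y ∈ Set.Icc (0 : ℝ) 1 ∧ ∀ i j, i ≠ j →
        trP (V i) (V j) = 2 * y ∧ trP2 (V i) (V j) = 2 * y ^ 2 := by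
  obtain ⟨c, hc⟩ := hec
  obtain ⟨A, hA0, hA⟩ := htff
  have hW := fun j => exists_w (V j) (hdim j)
  choose w hw hpw using hW
  have hn2 : (2:ℝ) ≤ (N:ℝ) := by exact_mod_cast hN
  have hdd4 : (4:ℝ) ≤ (d:ℝ) := by exact_mod_cast hd
  have hNpos : 0 < N := by omega
  have hcast : ((N - 1 : ℕ) : ℝ) = (N:ℝ) - 1 := by
    rw [Nat.cast_sub (by omega : 1 ≤ N)]
    simp
  -- quartic identity in inner-product form
  have htff' : ∀ x : EuclideanSpace ℝ (Fin d),
      ∑ i, ⟪x, proj (V i) x⟫ ^ 2 = A * ⟪x, x⟫ ^ 2 := by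
    intro x
    have h := hA x
    rw [show (∑ i, ‖proj (V i) x‖ ^ 4) = ∑ i, ⟪x, proj (V i) x⟫ ^ 2 from
      Finset.sum_congr rfl fun i _ => by rw [inner_proj_self]; ring] at h
    rw [h, real_inner_self_eq_norm_sq]
    ring
  -- polarization
  have hpol : ∀ x y : EuclideanSpace ℝ (Fin d),
      ∑ i, (⟪x, proj (V i) x⟫ * ⟪y, proj (V i) y⟫ + 2 * ⟪x, proj (V i) y⟫ ^ 2)
        = A * (⟪x, x⟫ * ⟪y, y⟫ + 2 * ⟪x, y⟫ ^ 2) := by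
    intro x y
    have hsymm : ∀ i : Fin N, ⟪y, proj (V i) x⟫ = ⟪x, proj (V i) y⟫ := fun i => by
      rw [proj_symm, real_inner_comm]
    have h1 := htff' (x + y)
    have h2 := htff' (x - y)
    have h3 := htff' x
    have h4 := htff' y
    have e1 : ∀ i : Fin N, ⟪x + y, proj (V i) (x + y)⟫
        = ⟪x, proj (V i) x⟫ + 2 * ⟪x, proj (V i) y⟫ + ⟪y, proj (V i) y⟫ := by
      intro i
      rw [map_add, inner_add_left, inner_add_right, inner_add_right, hsymm i]
      ring
    have e2 : ∀ i : Fin N, ⟪x - y, proj (V i) (x - y)⟫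
        = ⟪x, proj (V i) x⟫ - 2 * ⟪x, proj (V i) y⟫ + ⟪y, proj (V i) y⟫ := by
      intro i
      rw [map_sub, inner_sub_left, inner_sub_right, inner_sub_right, hsymm i]
      ring
    rw [real_inner_add_add_self] at h1
    simp only [e1] at h1
    rw [real_inner_sub_sub_self] at h2
    simp only [e2] at h2
    have hS : (4:ℝ) * ∑ i, (⟪x, proj (V i) x⟫ * ⟪y, proj (V i) y⟫ + 2 * ⟪x, proj (V i) y⟫ ^ 2)
        = (∑ i, (⟪x, proj (V i) x⟫ + 2 * ⟪x, proj (V i) y⟫ + ⟪y, proj (V i) y⟫) ^ 2)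
          + (∑ i, (⟪x, proj (V i) x⟫ - 2 * ⟪x, proj (V i) y⟫ + ⟪y, proj (V i) y⟫) ^ 2)
          - 2 * ∑ i, ⟪x, proj (V i) x⟫ ^ 2 - 2 * ∑ i, ⟪y, proj (V i) y⟫ ^ 2 := by
      rw [Finset.mul_sum, Finset.mul_sum, Finset.mul_sum, ← Finset.sum_add_distrib,
        ← Finset.sum_sub_distrib, ← Finset.sum_sub_distrib]
      exact Finset.sum_congr rfl fun i _ => by ring
    linear_combination hS / 4 + h1 / 4 + h2 / 4 - h3 / 2 - h4 / 2
  -- Lemma B : ∑ᵢ ⟪x, Pᵢ x⟫ is a multiple of ‖x‖²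
  have hB : ∀ x : EuclideanSpace ℝ (Fin d),
      (4:ℝ) * ∑ i, ⟪x, proj (V i) x⟫ = A * ((d:ℝ) + 2) * ⟪x, x⟫ := by
    intro x
    have h : ∑ m : Fin d, (∑ i, (⟪x, proj (V i) x⟫
          * ⟪EuclideanSpace.single m (1:ℝ), proj (V i) (EuclideanSpace.single m 1)⟫
          + 2 * ⟪x, proj (V i) (EuclideanSpace.single m (1:ℝ))⟫ ^ 2))
        = ∑ m : Fin d, A * (⟪x, x⟫
          * ⟪EuclideanSpace.single m (1:ℝ), EuclideanSpace.single m (1:ℝ)⟫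
          + 2 * ⟪x, EuclideanSpace.single m (1:ℝ)⟫ ^ 2) :=
      Finset.sum_congr rfl fun m _ => hpol x _
    rw [Finset.sum_comm] at h
    have hL : ∀ i : Fin N, ∑ m : Fin d, (⟪x, proj (V i) x⟫
          * ⟪EuclideanSpace.single m (1:ℝ), proj (V i) (EuclideanSpace.single m 1)⟫
          + 2 * ⟪x, proj (V i) (EuclideanSpace.single m (1:ℝ))⟫ ^ 2)
        = 4 * ⟪x, proj (V i) x⟫ := by
      intro i
      rw [Finset.sum_add_distrib, ← Finset.mul_sum, tr_proj (V i) (w i) (hw i) (hpw i),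
        ← Finset.mul_sum, sum_sq_coord]
      ring
    rw [Finset.sum_congr rfl fun i _ => hL i] at h
    have hR : ∑ m : Fin d, A * (⟪x, x⟫
          * ⟪EuclideanSpace.single m (1:ℝ), EuclideanSpace.single m (1:ℝ)⟫
          + 2 * ⟪x, EuclideanSpace.single m (1:ℝ)⟫ ^ 2)
        = A * (d:ℝ) * ⟪x, x⟫ + 2 * A * ⟪x, x⟫ := by
      have h1 : ∀ m : Fin d, A * (⟪x, x⟫
            * ⟪EuclideanSpace.single m (1:ℝ), EuclideanSpace.single m (1:ℝ)⟫
            + 2 * ⟪x, EuclideanSpace.single m (1:ℝ)⟫ ^ 2)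
          = A * ⟪x, x⟫ + 2 * A * (x m * x m) := by
        intro m
        rw [EuclideanSpace.inner_single_right, EuclideanSpace.inner_single_right]
        simp [EuclideanSpace.single_apply]
        ring
      rw [Finset.sum_congr rfl fun m _ => h1 m, Finset.sum_add_distrib, Finset.sum_const,
        ← Finset.mul_sum, ← inner_coord]
      simp [Finset.card_univ]
      ring
    rw [hR, ← Finset.mul_sum] at h
    rw [h]
    ring
  -- trace identity: A(d+2)d = 8N
  have hKd : A * ((d:ℝ) + 2) * (d:ℝ) = 8 * (N:ℝ) := by
    have h : ∑ m : Fin d, ((4:ℝ) * ∑ i, ⟪EuclideanSpace.single m (1:ℝ),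
          proj (V i) (EuclideanSpace.single m 1)⟫)
        = ∑ m : Fin d, A * ((d:ℝ) + 2)
          * ⟪EuclideanSpace.single m (1:ℝ), EuclideanSpace.single m (1:ℝ)⟫ :=
      Finset.sum_congr rfl fun m _ => hB _
    rw [← Finset.mul_sum, Finset.sum_comm] at h
    rw [Finset.sum_congr rfl fun i _ => tr_proj (V i) (w i) (hw i) (hpw i)] at h
    have h2 : ∑ m : Fin d, A * ((d:ℝ) + 2)
          * ⟪EuclideanSpace.single m (1:ℝ), EuclideanSpace.single m (1:ℝ)⟫
        = A * ((d:ℝ) + 2) * (d:ℝ) := by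
      have h3 : ∀ m : Fin d, A * ((d:ℝ) + 2)
            * ⟪EuclideanSpace.single m (1:ℝ), EuclideanSpace.single m (1:ℝ)⟫
          = A * ((d:ℝ) + 2) := by
        intro m
        rw [EuclideanSpace.inner_single_right]
        simp [EuclideanSpace.single_apply]
      rw [Finset.sum_congr rfl fun m _ => h3 m, Finset.sum_const, Finset.card_univ,
        Fintype.card_fin, nsmul_eq_mul]
      ring
    rw [h2, Finset.sum_const, Finset.card_univ, Fintype.card_fin, nsmul_eq_mul] at h
    linarith
  -- per-j sum of chordal traces
  have hPj : ∀ j, ∑ i, trP (V i) (V j) = A * ((d:ℝ) + 2) / 2 := by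
    intro j
    rw [Finset.sum_congr rfl fun i _ => trP_eq (V i) (V j) (w j) (hpw j)]
    rw [Finset.sum_comm]
    have hk : ∀ k : Fin 2, ∑ i, ⟪w j k, proj (V i) (w j k)⟫ = A * ((d:ℝ) + 2) / 4 := by
      intro k
      have h := hB (w j k)
      have h1 : ⟪w j k, w j k⟫ = (1:ℝ) := by
        rw [real_inner_self_eq_norm_sq, (hw j).1 k]; norm_num
      rw [h1, mul_one] at h
      linarith
    rw [Finset.sum_congr rfl fun k _ => hk k, Finset.sum_const, Finset.card_univ,
      Fintype.card_fin, nsmul_eq_mul]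
    ring
  -- diagonal values
  have hfix : ∀ j (k : Fin 2), proj (V j) (w j k) = w j k := by
    intro j k
    rw [hpw j]
    have h1 := orthonormal_iff_ite.1 (hw j)
    simp only [h1, ite_smul, one_smul, zero_smul]
    rw [Finset.sum_ite_eq' Finset.univ k (fun l => w j l)]
    simp
  have hwone : ∀ j (k : Fin 2), ⟪w j k, w j k⟫ = (1:ℝ) := by
    intro j k
    rw [real_inner_self_eq_norm_sq, (hw j).1 k]; norm_num
  have hdiagP : ∀ j, trP (V j) (V j) = 2 := by
    intro j
    rw [trP_eq (V j) (V j) (w j) (hpw j)]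
    rw [Finset.sum_congr rfl fun k _ => by rw [hfix j k, hwone j k]]
    simp
  have hdiagP2 : ∀ j, trP2 (V j) (V j) = 2 := by
    intro j
    rw [trP2_eq' (V j) (V j) (w j) (hpw j)]
    have h1 : ∀ k l : Fin 2, ⟪w j k, proj (V j) (w j l)⟫ = if k = l then (1:ℝ) else 0 := by
      intro k l
      rw [hfix j l]
      exact orthonormal_iff_ite.1 (hw j) k l
    simp only [h1]
    rw [Fin.sum_univ_two, Fin.sum_univ_two, Fin.sum_univ_two]
    norm_num
  -- per-j quadratic identity
  have hQj : ∀ j, ∑ i, ((trP (V i) (V j)) ^ 2 + 2 * trP2 (V i) (V j)) = 8 * A := by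
    intro j
    have h : ∑ k : Fin 2, ∑ l : Fin 2, (∑ i, (⟪w j k, proj (V i) (w j k)⟫
          * ⟪w j l, proj (V i) (w j l)⟫ + 2 * ⟪w j k, proj (V i) (w j l)⟫ ^ 2))
        = ∑ k : Fin 2, ∑ l : Fin 2, A * (⟪w j k, w j k⟫ * ⟪w j l, w j l⟫
          + 2 * ⟪w j k, w j l⟫ ^ 2) :=
      Finset.sum_congr rfl fun k _ => Finset.sum_congr rfl fun l _ => hpol _ _
    have hR : ∑ k : Fin 2, ∑ l : Fin 2, A * (⟪w j k, w j k⟫ * ⟪w j l, w j l⟫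
          + 2 * ⟪w j k, w j l⟫ ^ 2) = 8 * A := by
      have h1 := orthonormal_iff_ite.1 (hw j)
      simp only [h1]
      rw [Fin.sum_univ_two, Fin.sum_univ_two, Fin.sum_univ_two]
      norm_num
      ring
    rw [hR] at h
    rw [Finset.sum_congr rfl fun k (_ : k ∈ Finset.univ) => Finset.sum_comm,
      Finset.sum_comm] at h
    rw [Finset.sum_congr rfl (fun i _ => by
      rw [trP_eq (V i) (V j) (w j) (hpw j), trP2_eq' (V i) (V j) (w j) (hpw j)]
      simp only [Fin.sum_univ_two]
      ring : ∀ i ∈ Finset.univ, (trP (V i) (V j)) ^ 2 + 2 * trP2 (V i) (V j)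
        = ∑ k : Fin 2, ∑ l : Fin 2, (⟪w j k, proj (V i) (w j k)⟫
          * ⟪w j l, proj (V i) (w j l)⟫ + 2 * ⟪w j k, proj (V i) (w j l)⟫ ^ 2))]
    exact h
  -- pointwise inequality  (trP)² ≤ 2 trP2
  have hpt : ∀ i j, (trP (V i) (V j)) ^ 2 ≤ 2 * trP2 (V i) (V j) := by
    intro i j
    rw [trP_eq (V i) (V j) (w j) (hpw j), trP2_eq' (V i) (V j) (w j) (hpw j)]
    have hsym : ⟪w j 1, proj (V i) (w j 0)⟫ = ⟪w j 0, proj (V i) (w j 1)⟫ := by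
      rw [proj_symm, real_inner_comm]
    simp only [Fin.sum_univ_two, hsym]
    nlinarith [sq_nonneg (⟪w j 0, proj (V i) (w j 0)⟫ - ⟪w j 1, proj (V i) (w j 1)⟫),
      sq_nonneg ⟪w j 0, proj (V i) (w j 1)⟫]
  -- bounds on trP
  have hbound : ∀ i j, 0 ≤ trP (V i) (V j) ∧ trP (V i) (V j) ≤ 2 := by
    intro i j
    rw [trP_eq (V i) (V j) (w j) (hpw j)]
    have h1 : ∀ k : Fin 2, 0 ≤ ⟪w j k, proj (V i) (w j k)⟫
        ∧ ⟪w j k, proj (V i) (w j k)⟫ ≤ 1 := by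
      intro k
      rw [inner_proj_self]
      constructor
      · positivity
      · have h2 := norm_proj_le (V i) (w j k)
        rw [(hw j).1 k] at h2
        nlinarith [norm_nonneg (proj (V i) (w j k))]
    rw [Fin.sum_univ_two]
    constructor
    · linarith [(h1 0).1, (h1 1).1]
    · linarith [(h1 0).2, (h1 1).2]
  -- indices
  let j0 : Fin N := ⟨0, by omega⟩
  let i1 : Fin N := ⟨1, by omega⟩
  have hne : i1 ≠ j0 := by simp [i1, j0, Fin.ext_iff]
  -- scalar relations
  have hcc : 2 + ((N:ℝ) - 1) * c = A * ((d:ℝ) + 2) / 2 := by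
    have h := hPj j0
    rw [← Finset.sum_erase_add _ _ (Finset.mem_univ j0)] at h
    rw [Finset.sum_congr rfl (fun i hi => hc i j0 (Finset.ne_of_mem_erase hi))] at h
    rw [Finset.sum_const, Finset.card_erase_of_mem (Finset.mem_univ j0), Finset.card_univ,
      Fintype.card_fin, hdiagP j0, nsmul_eq_mul, hcast] at h
    linarith
  have hc2 : ((N:ℝ) - 1) * c * (d:ℝ) = 4 * (N:ℝ) - 2 * (d:ℝ) := by
    linear_combination (d:ℝ) * hcc + hKd / 2
  -- per-j erase-sum identity
  have hEj : ∀ j, ((N:ℝ) - 1) * c ^ 2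
      + 2 * ∑ i ∈ Finset.univ.erase j, trP2 (V i) (V j) = 8 * A - 8 := by
    intro j
    have h := hQj j
    rw [← Finset.sum_erase_add _ _ (Finset.mem_univ j)] at h
    rw [hdiagP j, hdiagP2 j] at h
    rw [Finset.sum_congr rfl (fun i hi => by
      rw [hc i j (Finset.ne_of_mem_erase hi)] : ∀ i ∈ Finset.univ.erase j,
        (trP (V i) (V j)) ^ 2 + 2 * trP2 (V i) (V j) = c ^ 2 + 2 * trP2 (V i) (V j))] at h
    rw [Finset.sum_add_distrib, Finset.sum_const, Finset.card_erase_of_mem (Finset.mem_univ j),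
      Finset.card_univ, Fintype.card_fin, nsmul_eq_mul, hcast, ← Finset.mul_sum] at h
    linarith
  -- master algebraic identity
  have hT : ((N:ℝ) - 1) * (d:ℝ)^2 * ((d:ℝ) + 2) * (8*A - 8 - 2*((N:ℝ) - 1)*c^2)
      = 8 * ((d:ℝ) - 2) * (N:ℝ) * (4*(N:ℝ) - (d:ℝ)^2) := by
    linear_combination (8*((N:ℝ)-1)*(d:ℝ)) * hKd
      - (2*((d:ℝ)+2)*(((N:ℝ)-1)*c*(d:ℝ) + 4*(N:ℝ) - 2*(d:ℝ))) * hc2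
  constructor
  · -- 4N = d² → equi-isoclinic
    intro h4
    have h4' : 4 * (N:ℝ) = (d:ℝ) ^ 2 := by exact_mod_cast congrArg (Nat.cast (R := ℝ)) h4
    have hz : 8*A - 8 - 2*((N:ℝ) - 1)*c^2 = 0 := by
      have hpos : 0 < ((N:ℝ) - 1) * (d:ℝ)^2 * ((d:ℝ) + 2) := by
        have h1 : (0:ℝ) < (N:ℝ) - 1 := by linarith
        have h2 : (0:ℝ) < (d:ℝ)^2 := by nlinarith
        have h3 : (0:ℝ) < (d:ℝ) + 2 := by linarith
        exact mul_pos (mul_pos h1 h2) h3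
      have h0 : ((N:ℝ) - 1) * (d:ℝ)^2 * ((d:ℝ) + 2) * (8*A - 8 - 2*((N:ℝ) - 1)*c^2) = 0 := by
        rw [hT]
        have hz2 : 4*(N:ℝ) - (d:ℝ)^2 = 0 := by linarith
        rw [hz2]; ring
      rcases mul_eq_zero.1 h0 with h | h
      · exact absurd h (ne_of_gt hpos)
      · exact h
    have hsum0 : ∀ j, ∑ i ∈ Finset.univ.erase j, (2 * trP2 (V i) (V j) - c^2) = 0 := by
      intro j
      have h := hEj j
      rw [Finset.sum_sub_distrib, Finset.sum_const, Finset.card_erase_of_mem (Finset.mem_univ j),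
        Finset.card_univ, Fintype.card_fin, nsmul_eq_mul, hcast, ← Finset.mul_sum]
      linarith
    have hpair : ∀ i j, i ≠ j → trP2 (V i) (V j) = c^2/2 := by
      intro i j hij
      have hmem : i ∈ Finset.univ.erase j := Finset.mem_erase.2 ⟨hij, Finset.mem_univ i⟩
      have hnon : ∀ i' ∈ Finset.univ.erase j, 0 ≤ 2 * trP2 (V i') (V j) - c^2 := by
        intro i' hi'
        have h := hpt i' j
        rw [hc i' j (Finset.ne_of_mem_erase hi')] at h
        linarith
      have h := (Finset.sum_eq_zero_iff_of_nonneg hnon).1 (hsum0 j) i hmem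
      linarith
    refine ⟨c/2, ⟨?_, ?_⟩, ?_⟩
    · have h := (hbound i1 j0).1
      rw [hc i1 j0 hne] at h
      linarith
    · have h := (hbound i1 j0).2
      rw [hc i1 j0 hne] at h
      linarith
    · intro i j hij
      refine ⟨by rw [hc i j hij]; ring, ?_⟩
      rw [hpair i j hij]
      ring
  · -- equi-isoclinic → 4N = d²
    rintro ⟨y, _, hiso⟩
    have hcy : c = 2*y := by rw [← hc i1 j0 hne, (hiso i1 j0 hne).1]
    have hz : 8*A - 8 - 2*((N:ℝ) - 1)*c^2 = 0 := by
      have h := hEj j0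
      rw [Finset.sum_congr rfl (fun i hi => (hiso i j0 (Finset.ne_of_mem_erase hi)).2)] at h
      rw [Finset.sum_const, Finset.card_erase_of_mem (Finset.mem_univ j0), Finset.card_univ,
        Fintype.card_fin, nsmul_eq_mul, hcast] at h
      linear_combination (-1) * h - ((N:ℝ)-1)*(c + 2*y) * hcy
    have h0 : 8 * ((d:ℝ) - 2) * (N:ℝ) * (4*(N:ℝ) - (d:ℝ)^2) = 0 := by
      rw [← hT, hz]; ring
    have h4 : 4 * (N:ℝ) = (d:ℝ)^2 := by
      rcases mul_eq_zero.1 h0 with h | h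
      · rcases mul_eq_zero.1 h with h | h
        · rcases mul_eq_zero.1 h with h | h
          · norm_num at h
          · linarith
        · linarith
      · linarith
    have : ((4 * N : ℕ) : ℝ) = ((d ^ 2 : ℕ) : ℝ) := by push_cast; linarith
    exact_mod_cast this
end
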